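/- Let ↣ be a dynamic policy over signature (D, dom, A) that has no edges from inactive domains (domains u with dom⁻¹(u) = ∅ satisfy α ⊨ u ↛ v for all α, v). If for every system M over the signature, M is ta^◇-secure with respect to ↣ iff M is ta^□-secure with respect to ↣, then ↣ is local. -/
import Mathlib


open Classical

/-- Binary trees over actions, values of the `ta` purge functions. -/
inductive TATree (A : Type) : Type where
  | eps : TATree A
  | node : TATree A → TATree A → A → TATree A

/-- Run a deterministic system along a trace (newest action at the head of the list). -/
def runL {S A : Type} (step : S → A → S) (s0 : S) : List A → S
  | [] => s0
  | a :: α => step (runL step s0 α) a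

/-- The permissive purge function `ta^◇` for a dynamic policy `P`. -/
noncomputable def taD {D A : Type} (dm : A → D) (P : List A → D → D → Prop) :
    List A → D → TATree A
  | [], _ => TATree.eps
  | a :: α, u =>
    if P α (dm a) u then TATree.node (taD dm P α u) (taD dm P α (dm a)) a
    else taD dm P α u

/-- The unwinding relations: smallest family of equivalence relations on traces
satisfying WSC and DLR with respect to the dynamic policy `P`. -/
inductive Unw {D A : Type} (dm : A → D) (P : List A → D → D → Prop) :
    D → List A → List A → Prop where
  | refl (u : D) (α : List A) : Unw dm P u α α
  | symm {u : D} {α β : List A} : Unw dm P u α β → Unw dm P u β α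
  | trans {u : D} {α β γ : List A} : Unw dm P u α β → Unw dm P u β γ → Unw dm P u α γ
  | dlr (u : D) (α : List A) (a : A) : ¬ P α (dm a) u → Unw dm P u (a :: α) α
  | wsc (u : D) {α β : List A} (a : A) :
      Unw dm P u α β → Unw dm P (dm a) α β → Unw dm P u (a :: α) (a :: β)

/-- The prohibitive purge function `ta^□`, whose condition is distributed knowledge
of the policy edge, interpreted over the Kripke structure given by the unwinding relations. -/
noncomputable def taB {D A : Type} (dm : A → D) (P : List A → D → D → Prop) :
    List A → D → TATree A
  | [], _ => TATree.eps
  | a :: α, u =>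
    if (∀ β, Unw dm P u α β → Unw dm P (dm a) α β → P β (dm a) u) then
      TATree.node (taB dm P α u) (taB dm P α (dm a)) a
    else taB dm P α u


private lemma runL_cons_id {A : Type} (α : List A) :
    runL (fun s a => a :: s) ([] : List A) α = α := by
  induction α with
  | nil => rfl
  | cons a α ih => simp [runL, ih]

private lemma node_ne {A : Type} (t1 t2 : TATree A) (a : A) :
    TATree.node t1 t2 a ≠ t1 := by
  intro h
  have := congrArg sizeOf h
  rw [TATree.node.sizeOf_spec] at this
  omega

/-- if a policy with no edges from inactive domains makes `ta^◇`-security and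
`ta^□`-security agree on every system, then the policy is local. -/
theorem statement_8 {D A : Type} (dm : A → D) (P : List A → D → D → Prop)
    (hrefl : ∀ α u, P α u u)
    (hinact : ∀ u, (∀ a, dm a ≠ u) → ∀ (α : List A) v, v ≠ u → ¬ P α u v)
    (hsec : ∀ (S O : Type) (step : S → A → S) (s0 : S) (obs : D → S → O),
      (∀ u (α β : List A), taD dm P α u = taD dm P β u →
          obs u (runL step s0 α) = obs u (runL step s0 β)) ↔
      (∀ u (α β : List A), Unw dm P u α β →
          obs u (runL step s0 α) = obs u (runL step s0 β))) :
    ∀ u v (α β : List A), taD dm P α u = taD dm P β u →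
        taD dm P α v = taD dm P β v → (P α u v ↔ P β u v) := by
  -- L1: Unw-equivalence implies taD-equality (canonical taD system)
  have L1 : ∀ u (α β : List A), Unw dm P u α β → taD dm P α u = taD dm P β u := by
    have h := (hsec (List A) (TATree A) (fun s a => a :: s) []
      (fun w γ => taD dm P γ w)).mp
    intro u α β hu
    have := h (by intro w γ δ hγδ; simp only [runL_cons_id]; exact hγδ) u α β hu
    simpa only [runL_cons_id] using this
  -- L2: taD-equality implies Unw-equivalence (Unw-class system)
  have L2 : ∀ u (α β : List A), taD dm P α u = taD dm P β u → Unw dm P u α β := by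
    have h := (hsec (List A) (List A → Prop) (fun s a => a :: s) []
      (fun w γ ρ => Unw dm P w γ ρ)).mpr
    have hUsec : ∀ u (α β : List A), Unw dm P u α β →
        (fun ρ => Unw dm P u (runL (fun s a => a :: s) [] α) ρ)
          = (fun ρ => Unw dm P u (runL (fun s a => a :: s) [] β) ρ) := by
      intro u α β hu
      simp only [runL_cons_id]
      funext ρ
      exact propext ⟨fun h' => (hu.symm).trans h', fun h' => hu.trans h'⟩
    intro u α β hu
    have := congrFun (h hUsec u α β hu) β
    simp only [runL_cons_id] at this
    exact this.mpr (Unw.refl u β)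
  -- main argument
  have main : ∀ u v (α β : List A), taD dm P α u = taD dm P β u →
      taD dm P α v = taD dm P β v → P α u v → P β u v := by
    intro u v α β hu hv hP
    by_contra hnP
    -- u = v case contradicts reflexivity
    rcases eq_or_ne v u with rfl | hvu
    · exact hnP (hrefl _ _)
    -- u must be active
    rcases Classical.em (∃ a, dm a = u) with ⟨a0, ha0⟩ | hne
    · have hUu : Unw dm P u α β := L2 u α β hu
      have hUv : Unw dm P v α β := L2 v α β hv
      have hW : Unw dm P v (a0 :: α) (a0 :: β) := by
        refine Unw.wsc v a0 hUv ?_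
        rw [ha0]; exact hUu
      have heq := L1 v _ _ hW
      have hα : taD dm P (a0 :: α) v
          = TATree.node (taD dm P α v) (taD dm P α u) a0 := by
        simp only [taD]
        rw [if_pos (by rw [ha0]; exact hP), ha0]
      have hβ : taD dm P (a0 :: β) v = taD dm P β v := by
        simp only [taD]
        rw [if_neg (by rw [ha0]; exact hnP)]
      rw [hα, hβ, ← hv] at heq
      exact node_ne _ _ _ heq
    · have : ∀ a, dm a ≠ u := fun a h => hne ⟨a, h⟩
      exact hinact u this α v hvu hP
  intro u v α β hu hv
  exact ⟨main u v α β hu hv, main u v β α hu.symm hv.symm⟩
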